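/- arXiv:2001.06861 — 2 statements merged into one kernel-verified Lean document; each statement's English description precedes it below -/
import Mathlib

section
/- Let G be a finite simple graph without isolated vertices and with at least one vertex. Then G belongs to class W_2 if and only if G is well-covered and F_G = A_G. -/
open MvPolynomial

attribute [local instance] Classical.propDecidable

/-- The v-number of a graded ideal `I` of a polynomial ring: the least `d ≥ 1` such that
there is a homogeneous polynomial `f` of degree `d` and an associated prime `p` of `S/I`
with `(I : f) = p`; by convention it is `0` when `I` is the ideal generated by the variables. -/
noncomputable def vNumber {K : Type*} [Field K] {σ : Type*}
    (I : Ideal (MvPolynomial σ K)) : ℕ :=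
  if I = Ideal.span (Set.range (X : σ → MvPolynomial σ K)) then 0
  else sInf {d : ℕ | 1 ≤ d ∧ ∃ f : MvPolynomial σ K, f.IsHomogeneous d ∧
    ∃ p ∈ associatedPrimes (MvPolynomial σ K) (MvPolynomial σ K ⧸ I),
      Submodule.colon I (Ideal.span {f}) = p}

/-- A squarefree monomial ideal: an ideal generated by squarefree monomials,
i.e. by products of distinct variables. -/
def IsSquarefreeMonomialIdeal {K : Type*} [Field K] {σ : Type*}
    (I : Ideal (MvPolynomial σ K)) : Prop :=
  ∃ E : Set (Finset σ), I = Ideal.span ((fun e : Finset σ => ∏ i ∈ e, X i) '' E)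

/-- A clutter on the vertex set `Fin s`: a family of edges, none of which contains another. -/
structure Clutter (s : ℕ) where
  edges : Finset (Finset (Fin s))
  antichain : ∀ e ∈ edges, ∀ f ∈ edges, e ⊆ f → e = f

namespace Clutter

variable {s : ℕ} (C : Clutter s)

/-- The edge ideal of a clutter. -/
noncomputable def edgeIdeal (K : Type*) [Field K] : Ideal (MvPolynomial (Fin s) K) :=
  Ideal.span ((fun e : Finset (Fin s) => ∏ i ∈ e, X i) '' C.edges)

/-- A stable (independent) set of a clutter: a set of vertices containing no edge. -/
def Stable (A : Finset (Fin s)) : Prop := ∀ e ∈ C.edges, ¬ (e ⊆ A)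

/-- A maximal stable set of a clutter. -/
def MaximalStable (A : Finset (Fin s)) : Prop :=
  C.Stable A ∧ ∀ B : Finset (Fin s), C.Stable B → A ⊆ B → A = B

/-- The neighbor set `N_C(A)`: all vertices `i` such that `{i} ∪ A` contains an edge. -/
noncomputable def neighborSet (A : Finset (Fin s)) : Finset (Fin s) :=
  Finset.univ.filter (fun i => ∃ e ∈ C.edges, e ⊆ insert i A)

/-- A vertex cover of a clutter: a set of vertices meeting every edge. -/
def IsVertexCover (B : Finset (Fin s)) : Prop := ∀ e ∈ C.edges, ∃ i ∈ e, i ∈ B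

/-- A minimal vertex cover: a vertex cover minimal with respect to inclusion. -/
def IsMinimalVertexCover (B : Finset (Fin s)) : Prop :=
  C.IsVertexCover B ∧ ∀ B' ⊂ B, ¬ C.IsVertexCover B'

/-- The independence number `β₀(C)`: the maximum size of a stable set. -/
noncomputable def indepNum : ℕ := sSup {n : ℕ | ∃ A : Finset (Fin s), C.Stable A ∧ A.card = n}

/-- The independent domination number `i(C)`: the minimum size of a maximal stable set. -/
noncomputable def idomNum : ℕ :=
  sInf {n : ℕ | ∃ A : Finset (Fin s), C.MaximalStable A ∧ A.card = n}

/-- The vertex covering number `α₀(C)`: the minimum size of a vertex cover. -/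
noncomputable def coverNum : ℕ :=
  sInf {n : ℕ | ∃ B : Finset (Fin s), C.IsVertexCover B ∧ B.card = n}

/-- The ideal of covers of a clutter, generated by the monomials of the minimal vertex covers. -/
noncomputable def coverIdeal (K : Type*) [Field K] : Ideal (MvPolynomial (Fin s) K) :=
  Ideal.span ((fun B : Finset (Fin s) => ∏ i ∈ B, X i) '' {B | C.IsMinimalVertexCover B})

/-- The clutter is well-covered if every maximal stable set has maximum cardinality `β₀(C)`. -/
def WellCovered : Prop := ∀ A : Finset (Fin s), C.MaximalStable A → A.card = C.indepNum

/-- Deletion of an edge from a clutter. -/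
def deleteEdge (e : Finset (Fin s)) : Clutter s :=
  ⟨C.edges.erase e, fun a ha b hb hab =>
    C.antichain a (Finset.mem_of_mem_erase ha) b (Finset.mem_of_mem_erase hb) hab⟩

/-- An edge-critical clutter: deleting any edge increases the independence number. -/
def EdgeCritical : Prop := ∀ e ∈ C.edges, C.indepNum < (C.deleteEdge e).indepNum

end Clutter

section Graphs

variable {V : Type*}

/-- The edge ideal of a simple graph. -/
noncomputable def gEdgeIdeal (K : Type*) [Field K] (G : SimpleGraph V) :
    Ideal (MvPolynomial V K) :=
  Ideal.span {m : MvPolynomial V K | ∃ i j : V, G.Adj i j ∧ m = X i * X j}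

/-- A stable (independent) set of vertices of a graph. -/
def gStable (G : SimpleGraph V) (A : Finset V) : Prop := ∀ i ∈ A, ∀ j ∈ A, ¬ G.Adj i j

/-- A maximal stable set of a graph. -/
def gMaximalStable (G : SimpleGraph V) (A : Finset V) : Prop :=
  gStable G A ∧ ∀ B : Finset V, gStable G B → A ⊆ B → A = B

/-- The independence number `β₀(G)`. -/
noncomputable def gIndepNum [Fintype V] (G : SimpleGraph V) : ℕ :=
  sSup {n : ℕ | ∃ A : Finset V, gStable G A ∧ A.card = n}

/-- A maximum stable set: a stable set of maximum cardinality `β₀(G)`. -/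
def gMaximumStable [Fintype V] (G : SimpleGraph V) (A : Finset V) : Prop :=
  gStable G A ∧ A.card = gIndepNum G

/-- The independent domination number `i(G)`: minimum size of a maximal stable set. -/
noncomputable def gIdomNum (G : SimpleGraph V) : ℕ :=
  sInf {n : ℕ | ∃ A : Finset V, gMaximalStable G A ∧ A.card = n}

/-- A well-covered graph: every maximal stable set is a maximum stable set. -/
def gWellCovered [Fintype V] (G : SimpleGraph V) : Prop :=
  ∀ A : Finset V, gMaximalStable G A → A.card = gIndepNum G

/-- The class `W₂`: graphs with at least two vertices in which any two disjoint stable sets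
are contained in two disjoint maximum stable sets. -/
def W2 [Fintype V] (G : SimpleGraph V) : Prop :=
  2 ≤ Fintype.card V ∧ ∀ A B : Finset V, gStable G A → gStable G B → Disjoint A B →
    ∃ A' B' : Finset V, gMaximumStable G A' ∧ gMaximumStable G B' ∧ Disjoint A' B' ∧
      A ⊆ A' ∧ B ⊆ B'

/-- The neighbor set of a set of vertices of a graph: all vertices adjacent to a vertex of `A`. -/
noncomputable def gNeighborSet [Fintype V] (G : SimpleGraph V) (A : Finset V) : Finset V :=
  Finset.univ.filter (fun i => ∃ j ∈ A, G.Adj i j)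

/-- A vertex cover of a graph. -/
def gIsVertexCover (G : SimpleGraph V) (B : Finset V) : Prop :=
  ∀ i j : V, G.Adj i j → i ∈ B ∨ j ∈ B

/-- A minimal vertex cover of a graph. -/
def gIsMinimalVertexCover (G : SimpleGraph V) (B : Finset V) : Prop :=
  gIsVertexCover G B ∧ ∀ B' ⊂ B, ¬ gIsVertexCover G B'

/-- An edge-critical graph: deleting any edge increases the independence number. -/
def gEdgeCritical [Fintype V] (G : SimpleGraph V) : Prop :=
  ∀ i j : V, G.Adj i j → gIndepNum G < gIndepNum (G.deleteEdges {s(i, j)})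

end Graphs

section Aux

variable {V : Type*} [Fintype V] {G : SimpleGraph V}

lemma mem_gNeighborSet {A : Finset V} {i : V} :
    i ∈ gNeighborSet G A ↔ ∃ j ∈ A, G.Adj i j := by
  simp [gNeighborSet]

lemma notMem_gNeighborSet_self {A : Finset V} (hA : gStable G A) {a : V} (ha : a ∈ A) :
    a ∉ gNeighborSet G A := by
  intro h
  obtain ⟨j, hj, hadj⟩ := mem_gNeighborSet.mp h
  exact hA a ha j hj hadj

lemma gStable_insert {A : Finset V} {v : V} (hA : gStable G A)
    (hv : v ∉ gNeighborSet G A) : gStable G (insert v A) := by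
  intro i hi j hj hadj
  rcases Finset.mem_insert.mp hi with hi' | hi'
  · rcases Finset.mem_insert.mp hj with hj' | hj'
    · exact G.irrefl (hi' ▸ hj' ▸ hadj)
    · exact hv (mem_gNeighborSet.mpr ⟨j, hj', hi' ▸ hadj⟩)
  · rcases Finset.mem_insert.mp hj with hj' | hj'
    · exact hv (mem_gNeighborSet.mpr ⟨i, hi', hj' ▸ hadj.symm⟩)
    · exact hA i hi' j hj' hadj

lemma gMinimal_of_cover {A : Finset V} (hA : gStable G A)
    (hc : gIsVertexCover G (gNeighborSet G A)) :
    gIsMinimalVertexCover G (gNeighborSet G A) := by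
  refine ⟨hc, fun B' hB' hcov => ?_⟩
  obtain ⟨u, hu, huB⟩ := Finset.exists_of_ssubset hB'
  obtain ⟨a, ha, hadj⟩ := mem_gNeighborSet.mp hu
  rcases hcov u a hadj with h | h
  · exact huB h
  · exact notMem_gNeighborSet_self hA ha (hB'.1 h)

lemma gMaximalStable.nbr_eq_compl {A : Finset V} (h : gMaximalStable G A) :
    gNeighborSet G A = Aᶜ := by
  ext i
  rw [Finset.mem_compl]
  constructor
  · intro hi hiA
    exact notMem_gNeighborSet_self h.1 hiA hi
  · intro hiA
    by_contra hiN
    have := h.2 (insert i A) (gStable_insert h.1 hiN) (Finset.subset_insert i A)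
    exact hiA (this ▸ Finset.mem_insert_self i A)

lemma gMaximalStable.minimal_cover {A : Finset V} (h : gMaximalStable G A) :
    gIsMinimalVertexCover G (gNeighborSet G A) := by
  refine gMinimal_of_cover h.1 ?_
  rw [h.nbr_eq_compl]
  intro i j hadj
  by_contra hc
  push_neg at hc
  simp only [Finset.mem_compl, not_not] at hc
  exact h.1 i hc.1 j hc.2 hadj

lemma gStable_card_le_indepNum {A : Finset V} (hA : gStable G A) :
    A.card ≤ gIndepNum G := by
  refine le_csSup ⟨Fintype.card V, ?_⟩ ⟨A, hA, rfl⟩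
  rintro n ⟨B, -, rfl⟩
  simpa using Finset.card_le_univ B

lemma gMaximumStable.maximal {A : Finset V} (h : gMaximumStable G A) :
    gMaximalStable G A := by
  refine ⟨h.1, fun B hB hAB => Finset.eq_of_subset_of_card_le hAB ?_⟩
  rw [h.2]
  exact gStable_card_le_indepNum hB

lemma gExtend (hkey : ∀ A : Finset V, gStable G A →
      gIsVertexCover G (gNeighborSet G A) → gMaximalStable G A)
    {A T : Finset V} (hA : gStable G A) (hT : gStable G T) (hd : Disjoint A T) :
    ∃ A' : Finset V, gMaximalStable G A' ∧ A ⊆ A' ∧ Disjoint A' T := by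
  classical
  set S : Finset (Finset V) :=
    Finset.univ.powerset.filter (fun X => gStable G X ∧ A ⊆ X ∧ Disjoint X T) with hS
  have hAS : A ∈ S := by
    simp only [hS, Finset.mem_filter, Finset.mem_powerset]
    exact ⟨Finset.subset_univ A, hA, Finset.Subset.refl A, hd⟩
  obtain ⟨A', hA'S, hmax⟩ := S.exists_max_image Finset.card ⟨A, hAS⟩
  simp only [hS, Finset.mem_filter, Finset.mem_powerset] at hA'S
  obtain ⟨-, hA'st, hAA', hA'T⟩ := hA'S
  have hadd : ∀ v : V, v ∉ A' → v ∉ gNeighborSet G A' → v ∈ T := by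
    intro v hvA' hvN
    by_contra hvT
    have hmem : insert v A' ∈ S := by
      simp only [hS, Finset.mem_filter, Finset.mem_powerset]
      exact ⟨Finset.subset_univ _, gStable_insert hA'st hvN,
        hAA'.trans (Finset.subset_insert v A'),
        Finset.disjoint_insert_left.mpr ⟨hvT, hA'T⟩⟩
    have := hmax _ hmem
    rw [Finset.card_insert_of_notMem hvA'] at this
    omega
  have hcov : gIsVertexCover G (gNeighborSet G A') := by
    intro i j hadj
    by_contra hc
    push_neg at hc
    obtain ⟨hiN, hjN⟩ := hc
    have hiA' : i ∉ A' := fun hi => hjN (mem_gNeighborSet.mpr ⟨i, hi, hadj.symm⟩)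
    have hjA' : j ∉ A' := fun hj => hiN (mem_gNeighborSet.mpr ⟨j, hj, hadj⟩)
    exact hT i (hadd i hiA' hiN) j (hadd j hjA' hjN) hadj
  exact ⟨A', hkey A' hA'st hcov, hAA', hA'T⟩

end Aux

/-- A graph `G` without isolated vertices (with at least one vertex) is in `W₂`
if and only if `G` is well-covered and `ℱ_G = 𝒜_G`. -/
theorem W2_iff_wellCovered_and_F_eq_A {V : Type*} [Fintype V] [Nonempty V]
    (G : SimpleGraph V) (hiso : ∀ v : V, ∃ w : V, G.Adj v w) :
    W2 G ↔ (gWellCovered G ∧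
      {A : Finset V | gMaximalStable G A} =
        {A : Finset V | gStable G A ∧ gIsMinimalVertexCover G (gNeighborSet G A)}) := by
  constructor
  · intro hW2
    have hwc : gWellCovered G := by
      intro A hA
      obtain ⟨A', B', hA', hB', hdis, hsub, -⟩ :=
        hW2.2 A ∅ hA.1 (fun i hi => absurd hi (Finset.notMem_empty i))
          (Finset.disjoint_empty_right A)
      rw [hA.2 A' hA'.1 hsub]
      exact hA'.2
    refine ⟨hwc, ?_⟩
    ext A
    simp only [Set.mem_setOf_eq]
    constructor
    · intro h
      exact ⟨h.1, h.minimal_cover⟩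
    · rintro ⟨hst, hcov, hmin⟩
      refine ⟨hst, fun B hB hAB => ?_⟩
      by_contra hne
      obtain ⟨v, hvB, hvA⟩ := Finset.exists_of_ssubset (hAB.ssubset_of_ne hne)
      have hvN : v ∉ gNeighborSet G A := by
        intro h
        obtain ⟨j, hj, hadj⟩ := mem_gNeighborSet.mp h
        exact hB v hvB j (hAB hj) hadj
      have hstv : gStable G ({v} : Finset V) := by
        intro i hi j hj hadj
        rw [Finset.mem_singleton] at hi hj
        subst hi; subst hj
        exact G.irrefl hadj
      obtain ⟨A', B', hA', hB', hdis, hsubA, hsubv⟩ :=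
        hW2.2 A {v} hst hstv (Finset.disjoint_singleton_right.mpr hvA)
      have hA'max : gMaximalStable G A' := hA'.maximal
      have hvA' : v ∉ A' :=
        Finset.disjoint_right.mp hdis (hsubv (Finset.mem_singleton_self v))
      have hssub : gNeighborSet G A ⊂ gNeighborSet G A' := by
        rw [Finset.ssubset_def]
        constructor
        · intro u hu
          obtain ⟨j, hj, hadj⟩ := mem_gNeighborSet.mp hu
          exact mem_gNeighborSet.mpr ⟨j, hsubA hj, hadj⟩
        · intro hcontra
          have : v ∈ gNeighborSet G A' := by
            rw [hA'max.nbr_eq_compl, Finset.mem_compl]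
            exact hvA'
          exact hvN (hcontra this)
      exact hA'max.minimal_cover.2 _ hssub hcov
  · rintro ⟨hwc, hset⟩
    have hkey : ∀ A : Finset V, gStable G A →
        gIsVertexCover G (gNeighborSet G A) → gMaximalStable G A := by
      intro A hA hc
      have hmem : A ∈ {A : Finset V | gStable G A ∧
          gIsMinimalVertexCover G (gNeighborSet G A)} :=
        ⟨hA, gMinimal_of_cover hA hc⟩
      rw [← hset] at hmem
      exact hmem
    constructor
    · obtain ⟨v⟩ : Nonempty V := inferInstance
      obtain ⟨w, hadj⟩ := hiso v
      exact Fintype.one_lt_card_iff.mpr ⟨v, w, hadj.ne⟩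
    · intro A B hA hB hd
      obtain ⟨B', hB'max, hBB', hdB'⟩ := gExtend hkey hB hA hd.symm
      obtain ⟨A', hA'max, hAA', hdA'⟩ := gExtend hkey hA hB'max.1 hdB'.symm
      exact ⟨A', B', ⟨hA'max.1, hwc A' hA'max⟩, ⟨hB'max.1, hwc B' hB'max⟩,
        hdA', hAA', hBB'⟩
end

section
/- A finite simple graph G is edge-critical if and only if β_0( G \ (N_G[t_i] ∪ N_G[t_j]) ) = β_0(G) − 1 for every edge {t_i, t_j} of G, where G \ A denotes the induced subgraph of G on V(G) \ A and N_G[v] is the closed neighborhood of v (v together with its adjacent vertices). -/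
open MvPolynomial

attribute [local instance] Classical.propDecidable

private lemma stable_sets_bdd {V : Type*} [Fintype V] (G : SimpleGraph V) :
    BddAbove {n : ℕ | ∃ A : Finset V, gStable G A ∧ A.card = n} := by
  refine ⟨Fintype.card V, ?_⟩
  rintro n ⟨A, -, rfl⟩
  exact A.card_le_univ.trans_eq Finset.card_univ

private lemma card_le_gIndepNum {V : Type*} [Fintype V] {G : SimpleGraph V} {A : Finset V}
    (h : gStable G A) : A.card ≤ gIndepNum G :=
  le_csSup (stable_sets_bdd G) ⟨A, h, rfl⟩

private lemma exists_maximum_stable {V : Type*} [Fintype V] (G : SimpleGraph V) :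
    ∃ A : Finset V, gStable G A ∧ A.card = gIndepNum G :=
  Nat.sSup_mem (s := {n : ℕ | ∃ A : Finset V, gStable G A ∧ A.card = n})
    ⟨0, ∅, fun i hi => absurd hi (Finset.notMem_empty i), Finset.card_empty⟩
    (stable_sets_bdd G)

private lemma mem_compl_closed {V : Type*} {G : SimpleGraph V} {i j : V}
    (v : ((insert i (G.neighborSet i) ∪ insert j (G.neighborSet j))ᶜ : Set V)) :
    (v : V) ≠ i ∧ ¬ G.Adj i v ∧ (v : V) ≠ j ∧ ¬ G.Adj j v := by
  have hv := v.2
  simp only [Set.mem_compl_iff, Set.mem_union, Set.mem_insert_iff,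
    SimpleGraph.mem_neighborSet] at hv
  push_neg at hv
  exact ⟨hv.1.1, hv.1.2, hv.2.1, hv.2.2⟩

/-- A graph `G` is edge-critical if and only if for every edge `{i, j}`,
`β₀(G \ (N_G[i] ∪ N_G[j])) = β₀(G) − 1`. -/
theorem gEdgeCritical_iff {V : Type*} [Fintype V] (G : SimpleGraph V) :
    gEdgeCritical G ↔ ∀ i j : V, G.Adj i j →
      gIndepNum (SimpleGraph.induce
          ((insert i (G.neighborSet i) ∪ insert j (G.neighborSet j))ᶜ) G) =
        gIndepNum G - 1 := by
  have key : ∀ i j : V, G.Adj i j →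
      gIndepNum (SimpleGraph.induce
          ((insert i (G.neighborSet i) ∪ insert j (G.neighborSet j))ᶜ) G) + 1 ≤
        gIndepNum G := by
    intro i j hij
    set C : Set V := (insert i (G.neighborSet i) ∪ insert j (G.neighborSet j))ᶜ with hC
    obtain ⟨B, hB, hBc⟩ := exists_maximum_stable (SimpleGraph.induce C G)
    have hAst : gStable G (insert i (B.image Subtype.val)) := by
      intro a ha b hb hab
      simp only [Finset.mem_insert, Finset.mem_image] at ha hb
      rcases ha with rfl | ⟨a', ha', rfl⟩
      · rcases hb with rfl | ⟨b', hb', rfl⟩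
        · exact G.irrefl hab
        · exact (mem_compl_closed b').2.1 hab
      · rcases hb with rfl | ⟨b', hb', rfl⟩
        · exact (mem_compl_closed a').2.1 hab.symm
        · exact hB a' ha' b' hb' (SimpleGraph.comap_adj.mpr hab)
    have hcard : (insert i (B.image Subtype.val)).card = B.card + 1 := by
      rw [Finset.card_insert_of_notMem, Finset.card_image_of_injective _ Subtype.val_injective]
      simp only [Finset.mem_image]
      rintro ⟨a', -, ha⟩
      exact (mem_compl_closed a').1 ha
    have hle := card_le_gIndepNum hAst
    have hBc2 : B.card = gIndepNum (SimpleGraph.induce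
        ((insert i (G.neighborSet i) ∪ insert j (G.neighborSet j))ᶜ) G) := hBc
    omega
  constructor
  · intro hcrit i j hij
    have hub := key i j hij
    set C : Set V := (insert i (G.neighborSet i) ∪ insert j (G.neighborSet j))ᶜ with hC
    obtain ⟨A, hA, hAc⟩ := exists_maximum_stable (G.deleteEdges {s(i,j)})
    have hdel : ∀ a ∈ A, ∀ b ∈ A, G.Adj a b → (a = i ∧ b = j) ∨ (a = j ∧ b = i) := by
      intro a ha b hb hab
      by_contra hcon
      refine hA a ha b hb ?_
      rw [SimpleGraph.deleteEdges_adj]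
      refine ⟨hab, ?_⟩
      simp only [Set.mem_singleton_iff, Sym2.eq_iff]
      tauto
    have hcrit' := hcrit i j hij
    have hiA : i ∈ A := by
      by_contra hi
      have hst : gStable G A := by
        intro a ha b hb hab
        rcases hdel a ha b hb hab with ⟨rfl, rfl⟩ | ⟨rfl, rfl⟩
        · exact hi ha
        · exact hi hb
      have := card_le_gIndepNum hst
      omega
    have hjA : j ∈ A := by
      by_contra hj
      have hst : gStable G A := by
        intro a ha b hb hab
        rcases hdel a ha b hb hab with ⟨rfl, rfl⟩ | ⟨rfl, rfl⟩
        · exact hj hb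
        · exact hj ha
      have := card_le_gIndepNum hst
      omega
    set B := ((A.erase i).erase j).subtype (· ∈ C) with hBdef
    have hsub : ∀ v ∈ (A.erase i).erase j, v ∈ C := by
      intro v hv
      have hvj : v ≠ j := Finset.ne_of_mem_erase hv
      have hv' := Finset.mem_of_mem_erase hv
      have hvi : v ≠ i := Finset.ne_of_mem_erase hv'
      have hvA : v ∈ A := Finset.mem_of_mem_erase hv'
      simp only [hC, Set.mem_compl_iff, Set.mem_union, Set.mem_insert_iff,
        SimpleGraph.mem_neighborSet]
      push_neg
      refine ⟨⟨hvi, fun hadj => ?_⟩, hvj, fun hadj => ?_⟩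
      · rcases hdel i hiA v hvA hadj with ⟨-, rfl⟩ | ⟨h1, -⟩
        · exact hvj rfl
        · exact hij.ne h1
      · rcases hdel j hjA v hvA hadj with ⟨h1, -⟩ | ⟨-, rfl⟩
        · exact hij.ne h1.symm
        · exact hvi rfl
    have hBst : gStable (SimpleGraph.induce C G) B := by
      intro a ha b hb hab
      have hab' : G.Adj ↑a ↑b := SimpleGraph.comap_adj.mp hab
      simp only [hBdef, Finset.mem_subtype] at ha hb
      have haA : (a:V) ∈ A := Finset.mem_of_mem_erase (Finset.mem_of_mem_erase ha)
      have hbA : (b:V) ∈ A := Finset.mem_of_mem_erase (Finset.mem_of_mem_erase hb)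
      rcases hdel _ haA _ hbA hab' with ⟨h1, -⟩ | ⟨h1, -⟩
      · exact Finset.ne_of_mem_erase (Finset.mem_of_mem_erase ha) h1
      · exact Finset.ne_of_mem_erase ha h1
    have hBcard : B.card = A.card - 2 := by
      rw [hBdef, Finset.card_subtype, Finset.filter_true_of_mem hsub,
        Finset.card_erase_of_mem (Finset.mem_erase.mpr ⟨hij.ne', hjA⟩),
        Finset.card_erase_of_mem hiA]
      omega
    have h1 : 1 ≤ gIndepNum G := by
      have hst : gStable G ({i} : Finset V) := by
        intro a ha b hb hab
        simp only [Finset.mem_singleton] at ha hb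
        subst ha; subst hb; exact G.irrefl hab
      simpa using card_le_gIndepNum hst
    have hle := card_le_gIndepNum hBst
    have hle2 : B.card ≤ gIndepNum (SimpleGraph.induce
        ((insert i (G.neighborSet i) ∪ insert j (G.neighborSet j))ᶜ) G) := hle
    omega
  · intro h i j hij
    have heq := h i j hij
    set C : Set V := (insert i (G.neighborSet i) ∪ insert j (G.neighborSet j))ᶜ with hC
    obtain ⟨B, hB, hBc⟩ := exists_maximum_stable (SimpleGraph.induce C G)
    have h1 : 1 ≤ gIndepNum G := by
      have hst : gStable G ({i} : Finset V) := by
        intro a ha b hb hab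
        simp only [Finset.mem_singleton] at ha hb
        subst ha; subst hb; exact G.irrefl hab
      simpa using card_le_gIndepNum hst
    set A := insert i (insert j (B.image Subtype.val)) with hAdef
    have hstA : gStable (G.deleteEdges {s(i,j)}) A := by
      intro a ha b hb hab
      rw [SimpleGraph.deleteEdges_adj] at hab
      obtain ⟨hab, hne⟩ := hab
      simp only [Set.mem_singleton_iff, Sym2.eq_iff] at hne
      push_neg at hne
      simp only [hAdef, Finset.mem_insert, Finset.mem_image] at ha hb
      rcases ha with rfl | rfl | ⟨a', ha', rfl⟩
      · rcases hb with rfl | rfl | ⟨b', hb', rfl⟩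
        · exact G.irrefl hab
        · exact (hne.1 rfl) rfl
        · exact (mem_compl_closed b').2.1 hab
      · rcases hb with rfl | rfl | ⟨b', hb', rfl⟩
        · exact (hne.2 rfl) rfl
        · exact G.irrefl hab
        · exact (mem_compl_closed b').2.2.2 hab
      · rcases hb with rfl | rfl | ⟨b', hb', rfl⟩
        · exact (mem_compl_closed a').2.1 hab.symm
        · exact (mem_compl_closed a').2.2.2 hab.symm
        · exact hB a' ha' b' hb' (SimpleGraph.comap_adj.mpr hab)
    have hiB : i ∉ insert j (B.image Subtype.val) := by
      simp only [Finset.mem_insert, Finset.mem_image]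
      rintro (rfl | ⟨a', -, ha⟩)
      · exact hij.ne rfl
      · exact (mem_compl_closed a').1 ha
    have hjB : j ∉ B.image Subtype.val := by
      simp only [Finset.mem_image]
      rintro ⟨a', -, ha⟩
      exact (mem_compl_closed a').2.2.1 ha
    have hcardA : A.card = B.card + 2 := by
      rw [hAdef, Finset.card_insert_of_notMem hiB, Finset.card_insert_of_notMem hjB,
        Finset.card_image_of_injective _ Subtype.val_injective]
    have hle := card_le_gIndepNum hstA
    have hBc2 : B.card = gIndepNum (SimpleGraph.induce
        ((insert i (G.neighborSet i) ∪ insert j (G.neighborSet j))ᶜ) G) := hBc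
    omega
end
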